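/- Shade-partition lemma for trees: let T be a finite rooted tree, S a subset of its vertices, and N a positive integer. Then S can be partitioned into N (possibly empty) classes S_1, ..., S_N ('shades') such that for every vertex v of T and every n ≤ N, if v has at least n descendants in S, then v has descendants in at least min(n, N) distinct shades. -/

import Mathlib

namespace Stmt13Aux
set_option linter.unusedSectionVars false

attribute [local instance] Classical.propDecidable

variable {V : Type*} (parent : V → Option V) (root : V)

def iterP : ℕ → V → Option V
  | 0, v => some v
  | n+1, v => (parent v).bind (iterP n)

lemma iterP_succ_right (n : ℕ) (u : V) :
    iterP parent (n+1) u = (iterP parent n u).bind parent := by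
  induction n generalizing u with
  | zero => simp [iterP]
  | succ n ih =>
    show (parent u).bind (iterP parent (n+1)) = ((parent u).bind (iterP parent n)).bind parent
    cases parent u with
    | none => rfl
    | some w => simpa using ih w

lemma reflTransGen_iff_iterP (u v : V) :
    Relation.ReflTransGen (fun a b => parent a = some b) u v ↔
      ∃ n, iterP parent n u = some v := by
  constructor
  · intro h
    induction h with
    | refl => exact ⟨0, rfl⟩
    | tail _ h2 ih =>
      obtain ⟨n, hn⟩ := ih
      exact ⟨n+1, by rw [iterP_succ_right, hn]; exact h2⟩
  · rintro ⟨n, hn⟩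
    induction n generalizing u with
    | zero => simp [iterP] at hn; subst hn; rfl
    | succ n ih =>
      show Relation.ReflTransGen _ u v
      rcases hp : parent u with _ | w
      · simp [iterP, hp] at hn
      · have : iterP parent n w = some v := by simpa [iterP, hp] using hn
        exact Relation.ReflTransGen.head hp (ih w this)

variable (htree : ∀ v : V, Relation.ReflTransGen (fun a b => parent a = some b) v root)

noncomputable def depth (v : V) : ℕ :=
  Nat.find ((reflTransGen_iff_iterP parent v root).1 (htree v))

lemma iterP_depth (v : V) : iterP parent (depth parent root htree v) v = some root :=
  Nat.find_spec ((reflTransGen_iff_iterP parent v root).1 (htree v))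

variable (hroot : parent root = none)

include hroot in
lemma depth_parent_lt {v w : V} (h : parent v = some w) :
    depth parent root htree w < depth parent root htree v := by
  have hd := iterP_depth parent root htree v
  rcases hdv : depth parent root htree v with _ | m
  · rw [hdv] at hd
    simp [iterP] at hd
    subst hd
    rw [hroot] at h; exact absurd h (by simp)
  · rw [hdv] at hd
    have : iterP parent m w = some root := by simpa [iterP, h] using hd
    have hle : depth parent root htree w ≤ m := Nat.find_le this
    omega

end Stmt13Aux

namespace Stmt13Aux
set_option linter.unusedSectionVars false

variable {V : Type*}

noncomputable def key (parent : V → Option V) (root : V)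
    (htree : ∀ v : V, Relation.ReflTransGen (fun a b => parent a = some b) v root)
    (hroot : parent root = none) (v : V) : List V :=
  match h : parent v with
  | none => [v]
  | some w => key parent root htree hroot w ++ [v]
termination_by depth parent root htree v
decreasing_by exact depth_parent_lt parent root htree hroot h

variable (parent : V → Option V) (root : V)
  (htree : ∀ v : V, Relation.ReflTransGen (fun a b => parent a = some b) v root)
  (hroot : parent root = none)

lemma key_of_none {v : V} (h : parent v = none) :
    key parent root htree hroot v = [v] := by
  rw [key.eq_def]; split <;> simp_all

lemma key_of_some {v w : V} (h : parent v = some w) :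
    key parent root htree hroot v = key parent root htree hroot w ++ [v] := by
  rw [key.eq_def]; split <;> simp_all

lemma key_getLast (v : V) : (key parent root htree hroot v).getLast? = some v := by
  rcases h : parent v with _ | w
  · rw [key_of_none parent root htree hroot h]; rfl
  · rw [key_of_some parent root htree hroot h]
    simp

lemma key_inj {u v : V} (h : key parent root htree hroot u = key parent root htree hroot v) :
    u = v := by
  have h1 := key_getLast parent root htree hroot u
  have h2 := key_getLast parent root htree hroot v
  rw [h, h2] at h1
  exact (Option.some_inj.1 h1).symm

lemma key_ne_nil (v : V) : key parent root htree hroot v ≠ [] := by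
  intro h
  have := key_getLast parent root htree hroot v
  rw [h] at this; simp at this


lemma prefix_of_desc {u v : V}
    (h : Relation.ReflTransGen (fun a b => parent a = some b) u v) :
    key parent root htree hroot v <+: key parent root htree hroot u := by
  induction h using Relation.ReflTransGen.head_induction_on with
  | refl => exact List.prefix_refl _
  | head step _ ih =>
    rename_i a c _
    refine ih.trans ?_
    rw [key_of_some parent root htree hroot step]
    exact List.prefix_append _ _

lemma depth_le_of_mem {x v : V} (hx : x ∈ key parent root htree hroot v) :
    depth parent root htree x ≤ depth parent root htree v := by
  rcases hp : parent v with _ | w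
  · rw [key_of_none parent root htree hroot hp] at hx
    simp at hx; subst hx; exact le_refl _
  · rw [key_of_some parent root htree hroot hp] at hx
    rw [List.mem_append] at hx
    rcases hx with hx | hx
    · have h1 := depth_le_of_mem (x := x) (v := w) hx
      have h2 := depth_parent_lt parent root htree hroot hp
      omega
    · simp at hx; subst hx; exact le_refl _
termination_by depth parent root htree v
decreasing_by exact depth_parent_lt parent root htree hroot hp

lemma key_nodup (v : V) : (key parent root htree hroot v).Nodup := by
  rcases hp : parent v with _ | w
  · rw [key_of_none parent root htree hroot hp]; simp
  · rw [key_of_some parent root htree hroot hp]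
    have h1 : (key parent root htree hroot w).Nodup := key_nodup w
    have h2 : v ∉ key parent root htree hroot w := by
      intro hmem
      have := depth_le_of_mem parent root htree hroot hmem
      have := depth_parent_lt parent root htree hroot hp
      omega
    rw [← List.concat_eq_append]
    exact List.Nodup.concat h2 h1
termination_by depth parent root htree v
decreasing_by exact depth_parent_lt parent root htree hroot hp

lemma desc_of_prefix (u v : V)
    (h : key parent root htree hroot v <+: key parent root htree hroot u) :
    Relation.ReflTransGen (fun a b => parent a = some b) u v := by
  rcases hp : parent u with _ | w
  · rw [key_of_none parent root htree hroot hp] at h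
    have hne := key_ne_nil parent root htree hroot v
    have : key parent root htree hroot v = [u] := by
      rcases h with ⟨t, ht⟩
      rcases hk : key parent root htree hroot v with _ | ⟨a, l⟩
      · exact absurd hk hne
      · rw [hk] at ht
        simp at ht
        obtain ⟨rfl, hl, -⟩ := ht
        rw [hl]
    have : v = u := key_inj parent root htree hroot (this.trans (key_of_none parent root htree hroot hp).symm)
    subst this; rfl
  · by_cases he : u = v
    · subst he; rfl
    · have hku := key_of_some parent root htree hroot hp
      have hpre : key parent root htree hroot v <+: key parent root htree hroot w := by
        have hlen : (key parent root htree hroot v).length ≤ (key parent root htree hroot w).length := by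
          have h1 := h.length_le
          rw [hku] at h1
          simp only [List.length_append, List.length_singleton] at h1
          rcases Nat.lt_or_ge (key parent root htree hroot v).length
              ((key parent root htree hroot w).length + 1) with h2 | h2
          · omega
          · have heq : (key parent root htree hroot v).length = (key parent root htree hroot u).length := by
              rw [hku]; simp; omega
            exact absurd (key_inj parent root htree hroot (h.eq_of_length heq).symm) he
        have htake : key parent root htree hroot v = (key parent root htree hroot u).take (key parent root htree hroot v).length :=
          List.prefix_iff_eq_take.1 h
        rw [hku, List.take_append_of_le_length hlen] at htake
        rw [htake]
        exact List.take_prefix _ _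
      exact Relation.ReflTransGen.head hp (desc_of_prefix w v hpre)
termination_by depth parent root htree u
decreasing_by exact depth_parent_lt parent root htree hroot hp

lemma key_length_le [Fintype V] (v : V) :
    (key parent root htree hroot v).length ≤ Fintype.card V :=
  List.Nodup.length_le_card (key_nodup parent root htree hroot v)

/-- `ofDigits` is injective on fixed-length lists of digits below the base. -/
lemma ofDigits_inj {b : ℕ} : ∀ (l1 l2 : List ℕ), l1.length = l2.length →
    (∀ d ∈ l1, d < b) → (∀ d ∈ l2, d < b) →
    Nat.ofDigits b l1 = Nat.ofDigits b l2 → l1 = l2 := by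
  intro l1
  induction l1 with
  | nil => intro l2 hl _ _ _; exact (List.length_eq_zero_iff.1 hl.symm).symm ▸ rfl
  | cons d1 t1 ih =>
    intro l2 hl hd1 hd2 hv
    rcases l2 with _ | ⟨d2, t2⟩
    · simp at hl
    · rw [Nat.ofDigits_cons, Nat.ofDigits_cons] at hv
      have hb : 0 < b := Nat.pos_of_ne_zero (by rintro rfl; exact absurd (hd1 d1 (by simp)) (by simp))
      have hdd : d1 = d2 := by
        have h1 : (d1 + b * Nat.ofDigits b t1) % b = d1 := by
          rw [Nat.add_mul_mod_self_left, Nat.mod_eq_of_lt (hd1 d1 (by simp))]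
        have h2 : (d2 + b * Nat.ofDigits b t2) % b = d2 := by
          rw [Nat.add_mul_mod_self_left, Nat.mod_eq_of_lt (hd2 d2 (by simp))]
        rw [← h1, ← h2, hv]
      subst hdd
      have ht : Nat.ofDigits b t1 = Nat.ofDigits b t2 := by
        have hmul : b * Nat.ofDigits b t1 = b * Nat.ofDigits b t2 := by omega
        exact Nat.eq_of_mul_eq_mul_left hb hmul
      have := ih t2 (by simpa using hl) (fun d hd => hd1 d (by simp [hd])) (fun d hd => hd2 d (by simp [hd])) ht
      rw [this]

section Digits

variable [Fintype V]

/-- the digit of a vertex: a number in `[1, card V]`. -/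
noncomputable def dig (x : V) : ℕ := ((Fintype.equivFin V) x).val + 1

lemma dig_lt (x : V) : dig x < Fintype.card V + 1 := by
  have := ((Fintype.equivFin V) x).isLt
  unfold dig; omega

lemma dig_pos (x : V) : 0 < dig x := Nat.succ_pos _

lemma dig_injective : Function.Injective (dig (V := V)) := by
  intro x y h
  unfold dig at h
  exact (Fintype.equivFin V).injective (Fin.ext (by omega))

/-- little-endian digit list of a vertex's key, padded with zeros (as high digits)
to length `card V`. -/
noncomputable def padkey (v : V) : List ℕ :=
  List.replicate (Fintype.card V - (key parent root htree hroot v).length) 0 ++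
    ((key parent root htree hroot v).reverse.map dig)

lemma padkey_length (v : V) : (padkey parent root htree hroot v).length = Fintype.card V := by
  unfold padkey
  have := key_length_le parent root htree hroot v
  simp; omega

lemma padkey_digits_lt (v : V) :
    ∀ d ∈ padkey parent root htree hroot v, d < Fintype.card V + 1 := by
  intro d hd
  unfold padkey at hd
  rw [List.mem_append] at hd
  rcases hd with hd | hd
  · rw [List.eq_of_mem_replicate hd]; omega
  · obtain ⟨x, -, rfl⟩ := List.mem_map.1 hd
    exact dig_lt x

/-- the numerical encoding of a vertex. -/
noncomputable def gval (v : V) : ℕ :=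
  Nat.ofDigits (Fintype.card V + 1) (padkey parent root htree hroot v)

/-- value of the (reversed) key digits of `v`. -/
noncomputable def aval (v : V) : ℕ :=
  Nat.ofDigits (Fintype.card V + 1) ((key parent root htree hroot v).reverse.map dig)

include root in
lemma one_lt_B : 1 < Fintype.card V + 1 := by
  have : 0 < Fintype.card V := Fintype.card_pos_iff.2 ⟨root⟩
  omega

lemma gval_bounds_of_prefix {u v : V}
    (h : key parent root htree hroot v <+: key parent root htree hroot u) :
    (Fintype.card V + 1) ^ (Fintype.card V - (key parent root htree hroot v).length) *
        aval parent root htree hroot v ≤ gval parent root htree hroot u ∧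
      gval parent root htree hroot u <
        (Fintype.card V + 1) ^ (Fintype.card V - (key parent root htree hroot v).length) *
          (aval parent root htree hroot v + 1) := by
  classical
  set B := Fintype.card V + 1 with hB
  set M := Fintype.card V with hM
  set kv := key parent root htree hroot v with hkv
  set ku := key parent root htree hroot u with hku
  obtain ⟨t, ht⟩ := h
  have hlenu : ku.length ≤ M := key_length_le parent root htree hroot u
  have hlen : ku.length = kv.length + t.length := by rw [← ht]; simp
  set s : List ℕ := List.replicate (M - ku.length) 0 ++ (t.reverse.map dig) with hs
  have hslen : s.length = M - kv.length := by
    rw [hs, List.length_append, List.length_replicate, List.length_map, List.length_reverse]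
    omega
  have hpk : padkey parent root htree hroot u = s ++ (kv.reverse.map dig) := by
    unfold padkey
    rw [← hku, ← ht]
    simp only [hs, List.reverse_append, List.map_append, List.append_assoc, List.length_append]
    congr 2
    omega
  have hsd : ∀ d ∈ s, d < B := by
    intro d hd
    rw [hs, List.mem_append] at hd
    rcases hd with hd | hd
    · rw [List.eq_of_mem_replicate hd]; omega
    · obtain ⟨x, -, rfl⟩ := List.mem_map.1 hd
      exact dig_lt x
  have hsv : Nat.ofDigits B s < B ^ (M - kv.length) := by
    rw [← hslen]
    exact Nat.ofDigits_lt_base_pow_length (one_lt_B root) hsd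
  have hgu : gval parent root htree hroot u =
      Nat.ofDigits B s + B ^ (M - kv.length) * aval parent root htree hroot v := by
    unfold gval aval
    rw [hpk, Nat.ofDigits_append, hslen]
  constructor
  · rw [hgu]; omega
  · rw [hgu]
    have : B ^ (M - kv.length) * (aval parent root htree hroot v + 1) =
        B ^ (M - kv.length) * aval parent root htree hroot v + B ^ (M - kv.length) := by ring
    omega

lemma prefix_of_gval_bounds {u v : V}
    (h1 : (Fintype.card V + 1) ^ (Fintype.card V - (key parent root htree hroot v).length) *
        aval parent root htree hroot v ≤ gval parent root htree hroot u)
    (h2 : gval parent root htree hroot u <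
        (Fintype.card V + 1) ^ (Fintype.card V - (key parent root htree hroot v).length) *
          (aval parent root htree hroot v + 1)) :
    key parent root htree hroot v <+: key parent root htree hroot u := by
  classical
  set B := Fintype.card V + 1 with hB
  set M := Fintype.card V with hM
  set kv := key parent root htree hroot v with hkv
  set ku := key parent root htree hroot u with hku
  set r : ℕ := M - kv.length with hr
  set pk := padkey parent root htree hroot u with hpk
  have hlenu : ku.length ≤ M := key_length_le parent root htree hroot u
  have hlenv : kv.length ≤ M := key_length_le parent root htree hroot v
  have hpklen : pk.length = M := padkey_length parent root htree hroot u
  have hpkd : ∀ d ∈ pk, d < B := padkey_digits_lt parent root htree hroot u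
  have hsplit : pk = pk.take r ++ pk.drop r := (List.take_append_drop r pk).symm
  have htlen : (pk.take r).length = r := by
    rw [List.length_take, hpklen]; omega
  have hgu : gval parent root htree hroot u =
      Nat.ofDigits B (pk.take r) + B ^ r * Nat.ofDigits B (pk.drop r) := by
    unfold gval
    rw [← hpk]
    conv_lhs => rw [hsplit]
    rw [Nat.ofDigits_append, htlen]
  have hts : Nat.ofDigits B (pk.take r) < B ^ r := by
    have h := Nat.ofDigits_lt_base_pow_length (b := B) (l := pk.take r) (one_lt_B root)
      (fun d hd => hpkd d (List.mem_of_mem_take hd))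
    rwa [htlen] at h
  -- the high part must equal `aval v`
  have hX : Nat.ofDigits B (pk.drop r) = aval parent root htree hroot v := by
    set X := Nat.ofDigits B (pk.drop r) with hXdef
    set A := aval parent root htree hroot v with hA
    rw [hgu] at h1 h2
    have hle : A ≤ X := by
      by_contra hc
      push_neg at hc
      have : X + 1 ≤ A := hc
      have : B ^ r * (X + 1) ≤ B ^ r * A := Nat.mul_le_mul_left _ this
      have hexp : B ^ r * (X + 1) = B ^ r * X + B ^ r := by ring
      omega
    have hge : X ≤ A := by
      by_contra hc
      push_neg at hc
      have : A + 1 ≤ X := hc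
      have : B ^ r * (A + 1) ≤ B ^ r * X := Nat.mul_le_mul_left _ this
      omega
    omega
  -- drop r pk is the digit list of kv
  have hdig : pk.drop r = kv.reverse.map dig := by
    have hlen1 : (pk.drop r).length = kv.length := by
      rw [List.length_drop, hpklen]; omega
    have hlen2 : (kv.reverse.map dig).length = kv.length := by simp
    refine ofDigits_inj _ _ (hlen1.trans hlen2.symm)
      (fun d hd => hpkd d (List.mem_of_mem_drop hd)) ?_ ?_
    · intro d hd
      obtain ⟨x, -, rfl⟩ := List.mem_map.1 hd
      exact dig_lt x
    · rw [hX]; rfl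
  -- deduce the prefix relation
  have hkule : kv.length ≤ ku.length := by
    by_contra hc
    push_neg at hc
    -- then position r of pk is a zero
    have hzero : (0:ℕ) ∈ pk.drop r := by
      have : pk.drop r = List.replicate ((M - ku.length) - r) 0 ++
          (ku.reverse.map dig).drop (r - (M - ku.length)) := by
        rw [hpk]
        unfold padkey
        rw [← hku, List.drop_append, List.drop_replicate, List.length_replicate]
      rw [this, List.mem_append]
      left
      refine List.mem_replicate.2 ⟨?_, rfl⟩
      omega
    rw [hdig] at hzero
    obtain ⟨x, -, hx⟩ := List.mem_map.1 hzero
    exact absurd hx.symm (Nat.ne_of_lt (dig_pos x))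
  have hdrop : pk.drop r = ((ku.take kv.length).reverse.map dig) := by
    rw [hpk]
    unfold padkey
    rw [← hku, List.drop_append, List.drop_replicate, List.length_replicate]
    have hz1 : (M - ku.length) - r = 0 := by omega
    have hz2 : r - (M - ku.length) = ku.length - kv.length := by omega
    rw [hz1, hz2]
    simp only [List.replicate_zero, List.nil_append]
    rw [← List.map_drop]
    congr 1
    rw [List.reverse_take]
  rw [hdig] at hdrop
  have hrev : kv.reverse = (ku.take kv.length).reverse :=
    List.map_injective_iff.2 (dig_injective (V := V)) hdrop
  have htake : kv = ku.take kv.length := List.reverse_injective hrev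
  rw [htake]
  exact List.take_prefix _ _

lemma gval_injective : Function.Injective (gval parent root htree hroot) := by
  intro u u' h
  have b1 := gval_bounds_of_prefix parent root htree hroot (List.prefix_refl (key parent root htree hroot u))
  have b2 := gval_bounds_of_prefix parent root htree hroot (List.prefix_refl (key parent root htree hroot u'))
  rw [h] at b1
  rw [← h] at b2
  have p1 : key parent root htree hroot u <+: key parent root htree hroot u' :=
    prefix_of_gval_bounds parent root htree hroot b1.1 b1.2
  have p2 : key parent root htree hroot u' <+: key parent root htree hroot u :=
    prefix_of_gval_bounds parent root htree hroot b2.1 b2.2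
  exact key_inj parent root htree hroot
    (p2.eq_of_length (Nat.le_antisymm p2.length_le p1.length_le)).symm

end Digits

/-- the `i`-th smallest element of a sorted list has exactly `i` smaller elements. -/
lemma list_pick : ∀ (l : List ℕ), l.Pairwise (· < ·) → ∀ i (h : i < l.length),
    (l.filter (fun x => decide (x < l.get ⟨i, h⟩))).length = i := by
  intro l
  induction l with
  | nil => intro _ i h; simp at h
  | cons a t ih =>
    intro hs i h
    have hat : ∀ x ∈ t, a < x := fun x hx => (List.pairwise_cons.1 hs).1 x hx
    have hst : t.Pairwise (· < ·) := (List.pairwise_cons.1 hs).2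
    rcases i with _ | i
    · have : (a :: t).get ⟨0, h⟩ = a := rfl
      rw [this]
      have : (a :: t).filter (fun x => decide (x < a)) = [] := by
        rw [List.filter_eq_nil_iff]
        intro x hx
        simp only [decide_eq_true_eq]
        rcases List.mem_cons.1 hx with rfl | hx
        · omega
        · have := hat x hx; omega
      rw [this]; rfl
    · have hi : i < t.length := by simpa using h
      have hget : (a :: t).get ⟨i+1, h⟩ = t.get ⟨i, hi⟩ := rfl
      rw [hget]
      have hmem : t.get ⟨i, hi⟩ ∈ t := List.get_mem _ _
      have : (a :: t).filter (fun x => decide (x < t.get ⟨i, hi⟩)) =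
          a :: t.filter (fun x => decide (x < t.get ⟨i, hi⟩)) := by
        rw [List.filter_cons]
        simp only [decide_eq_true_eq]
        rw [if_pos]
        exact hat _ hmem
      rw [this, List.length_cons, ih hst i hi]

lemma finset_pick (T : Finset ℕ) (i : ℕ) (hi : i < T.card) :
    ∃ q ∈ T, (T.filter (fun x => x < q)).card = i := by
  classical
  set l := T.sort (· ≤ ·) with hl
  have hlen : l.length = T.card := Finset.length_sort _
  have hsorted : l.Pairwise (· < ·) := List.sortedLT_iff_pairwise.1 (Finset.sortedLT_sort T)
  have hi' : i < l.length := by omega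
  refine ⟨l.get ⟨i, hi'⟩, ?_, ?_⟩
  · rw [← Finset.mem_sort (· ≤ ·)]
    exact List.get_mem _ _
  · have h1 := list_pick l hsorted i hi'
    have hval : (T.filter (fun x => x < l.get ⟨i, hi'⟩)).val =
        Multiset.filter (fun x => x < l.get ⟨i, hi'⟩) (l : Multiset ℕ) := by
      rw [Finset.filter_val]
      conv_lhs => rw [← Finset.sort_eq T (· ≤ ·)]
    have : (T.filter (fun x => x < l.get ⟨i, hi'⟩)).card =
        (l.filter (fun x => decide (x < l.get ⟨i, hi'⟩))).length := by
      rw [Finset.card_def, hval, Multiset.filter_coe]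
      simp
    rw [this, h1]

end Stmt13Aux

/-- Shade-partition lemma for finite rooted trees: a subset `S` of vertices can be
painted with `N` shades so that any vertex with at least `n ≤ N` descendants in `S`
has descendants in `S` of at least `n` distinct shades. Descendants include the
vertex itself; the tree is given by a parent function, all vertices reaching the root. -/
theorem stmt13 {V : Type*} [Fintype V] (parent : V → Option V) (root : V)
    (hroot : parent root = none)
    (htree : ∀ v : V, Relation.ReflTransGen (fun a b => parent a = some b) v root)
    (S : Set V) (N : ℕ) (hN : 0 < N) :
    ∃ c : V → Fin N, ∀ (v : V) (n : ℕ), n ≤ N →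
      n ≤ {u | Relation.ReflTransGen (fun a b => parent a = some b) u v ∧ u ∈ S}.ncard →
      n ≤ (c '' {u | Relation.ReflTransGen (fun a b => parent a = some b) u v ∧ u ∈ S}).ncard := by
  classical
  let g : V → ℕ := Stmt13Aux.gval parent root htree hroot
  have ginj : Function.Injective g := Stmt13Aux.gval_injective parent root htree hroot
  let Sf : Finset V := Finset.univ.filter (· ∈ S)
  let rank : V → ℕ := fun u => (Sf.filter (fun w => g w < g u)).card
  refine ⟨fun u => ⟨rank u % N, Nat.mod_lt _ hN⟩, ?_⟩
  intro v n hnN hn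
  rcases Nat.eq_zero_or_pos n with rfl | hnpos
  · exact Nat.zero_le _
  set D : Set V := {u | Relation.ReflTransGen (fun a b => parent a = some b) u v ∧ u ∈ S}
    with hD
  set Df : Finset V :=
    Sf.filter (fun u => Relation.ReflTransGen (fun a b => parent a = some b) u v) with hDf
  have hDset : D = ↑Df := by
    ext u
    simp only [hD, hDf, Set.mem_setOf_eq, Finset.coe_filter, Finset.mem_filter,
      Finset.mem_univ, true_and, Sf]
    simp [and_comm]
  have hn' : n ≤ Df.card := by
    rwa [hDset, Set.ncard_coe_finset] at hn
  set lo := (Fintype.card V + 1) ^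
      (Fintype.card V - (Stmt13Aux.key parent root htree hroot v).length) *
      Stmt13Aux.aval parent root htree hroot v with hlo
  set hi := (Fintype.card V + 1) ^
      (Fintype.card V - (Stmt13Aux.key parent root htree hroot v).length) *
      (Stmt13Aux.aval parent root htree hroot v + 1) with hhi
  have hmemD : ∀ u ∈ Df, lo ≤ g u ∧ g u < hi := by
    intro u hu
    have hu' : Relation.ReflTransGen (fun a b => parent a = some b) u v :=
      (Finset.mem_filter.1 hu).2
    exact Stmt13Aux.gval_bounds_of_prefix parent root htree hroot
      (Stmt13Aux.prefix_of_desc parent root htree hroot hu')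
  have hconv : ∀ u ∈ Sf, lo ≤ g u → g u < hi → u ∈ Df := by
    intro u hu h1 h2
    exact Finset.mem_filter.2 ⟨hu, Stmt13Aux.desc_of_prefix parent root htree hroot u v
      (Stmt13Aux.prefix_of_gval_bounds parent root htree hroot h1 h2)⟩
  set a := (Sf.filter (fun w => g w < lo)).card with ha
  have hrank : ∀ u ∈ Df, rank u = a + (Df.filter (fun w => g w < g u)).card := by
    intro u hu
    have hsplit : Sf.filter (fun w => g w < g u) =
        (Sf.filter (fun w => g w < lo)) ∪ (Df.filter (fun w => g w < g u)) := by
      ext w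
      simp only [Finset.mem_union, Finset.mem_filter]
      constructor
      · rintro ⟨hwS, hwlt⟩
        rcases Nat.lt_or_ge (g w) lo with hc | hc
        · exact Or.inl ⟨hwS, hc⟩
        · have hwhi : g w < hi := lt_trans hwlt (hmemD u hu).2
          have hwD := hconv w hwS hc hwhi
          exact Or.inr ⟨hwD, hwlt⟩
      · rintro (⟨hwS, hwlt⟩ | ⟨hwD, hwlt⟩)
        · exact ⟨hwS, lt_of_lt_of_le hwlt (hmemD u hu).1⟩
        · exact ⟨(Finset.mem_filter.1 hwD).1, hwlt⟩
    have hdisj : Disjoint (Sf.filter (fun w => g w < lo)) (Df.filter (fun w => g w < g u)) := by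
      rw [Finset.disjoint_left]
      intro w hw1 hw2
      have h1 : g w < lo := (Finset.mem_filter.1 hw1).2
      have h2 : lo ≤ g w := (hmemD w (Finset.mem_filter.1 hw2).1).1
      omega
    show (Sf.filter (fun w => g w < g u)).card = _
    rw [hsplit, Finset.card_union_of_disjoint hdisj]
  have hpick : ∀ i, i < n → ∃ u ∈ Df, rank u = a + i := by
    intro i hi'
    have hgcard : (Df.image g).card = Df.card := Finset.card_image_of_injective _ ginj
    obtain ⟨q, hq, hqc⟩ := Stmt13Aux.finset_pick (Df.image g) i (by omega)
    obtain ⟨u, hu, rfl⟩ := Finset.mem_image.1 hq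
    refine ⟨u, hu, ?_⟩
    rw [hrank u hu]
    congr 1
    have himg : (Df.filter (fun w => g w < g u)).image g =
        (Df.image g).filter (fun x => x < g u) := by
      ext x
      simp only [Finset.mem_image, Finset.mem_filter]
      constructor
      · rintro ⟨w, ⟨hwD, hlt⟩, rfl⟩
        exact ⟨⟨w, hwD, rfl⟩, hlt⟩
      · rintro ⟨⟨w, hwD, rfl⟩, hlt⟩
        exact ⟨w, ⟨hwD, hlt⟩, rfl⟩
    have hci := Finset.card_image_of_injective (Df.filter (fun w => g w < g u)) ginj
    rw [← hci, himg, hqc]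
  set W : Finset (Fin N) :=
    (Finset.range n).image (fun i => (⟨(a + i) % N, Nat.mod_lt _ hN⟩ : Fin N)) with hW
  have hWcard : W.card = n := by
    rw [hW, Finset.card_image_of_injOn, Finset.card_range]
    intro i hi' j hj' hij
    rw [Finset.mem_coe, Finset.mem_range] at hi' hj'
    have hv : (a + i) % N = (a + j) % N := congrArg Fin.val hij
    have h1 : i % N = j % N := Nat.ModEq.add_left_cancel' a hv
    rwa [Nat.mod_eq_of_lt (by omega), Nat.mod_eq_of_lt (by omega)] at h1
  have hsub : (W : Set (Fin N)) ⊆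
      (fun u => (⟨rank u % N, Nat.mod_lt _ hN⟩ : Fin N)) '' D := by
    intro x hx
    rw [Finset.mem_coe, hW, Finset.mem_image] at hx
    obtain ⟨i, hi', rfl⟩ := hx
    rw [Finset.mem_range] at hi'
    obtain ⟨u, hu, hru⟩ := hpick i hi'
    refine ⟨u, ?_, ?_⟩
    · rw [hDset]; exact hu
    · simp [hru]
  calc n = W.card := hWcard.symm
    _ = (W : Set (Fin N)).ncard := (Set.ncard_coe_finset W).symm
    _ ≤ _ := Set.ncard_le_ncard hsub (Set.Finite.image _ (Set.toFinite D))
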